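/- The lattice (D4)³ ⊕ U² is isometric to an index-2 sublattice of the even lattice D4 ⊕ E8 ⊕ U(2) ⊕ U, and D4 ⊕ E8 ⊕ U(2) ⊕ U admits a primitive isometric embedding into the K3 lattice (E8)² ⊕ U³ whose orthogonal complement is isometric to D4 ⊕ U(2). -/

import Mathlib

open Matrix

namespace MaxAlg

/-- Orthogonal direct sum of two Gram matrices. -/
def dsum {ι κ : Type*} (M : Matrix ι ι ℤ) (N : Matrix κ κ ℤ) : Matrix (ι ⊕ κ) (ι ⊕ κ) ℤ :=
  Matrix.fromBlocks M 0 0 N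

/-- The hyperbolic plane U. -/
def U : Matrix (Fin 2) (Fin 2) ℤ := !![0, 1; 1, 0]

/-- The root lattice A₂ (Cartan matrix). -/
def A2 : Matrix (Fin 2) (Fin 2) ℤ := !![2, -1; -1, 2]

/-- The root lattice D₄ (Cartan matrix). -/
def D4 : Matrix (Fin 4) (Fin 4) ℤ := !![2, -1, 0, 0; -1, 2, -1, -1; 0, -1, 2, 0; 0, -1, 0, 2]

/-- The root lattice E₆ (Cartan matrix). -/
def E6 : Matrix (Fin 6) (Fin 6) ℤ := CartanMatrix.E₆

/-- The root lattice E₈ (Cartan matrix). -/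
def E8 : Matrix (Fin 8) (Fin 8) ℤ := CartanMatrix.E₈

abbrev K3Ix : Type := (Fin 8 ⊕ Fin 8) ⊕ (Fin 2 ⊕ (Fin 2 ⊕ Fin 2))

/-- The K3 lattice (E₈)² ⊕ U³. -/
def K3 : Matrix K3Ix K3Ix ℤ := dsum (dsum E8 E8) (dsum U (dsum U U))

abbrev Λ0Ix : Type := Fin 2 ⊕ ((Fin 8 ⊕ Fin 8) ⊕ (Fin 2 ⊕ Fin 2))

/-- Λ₀ = A₂ ⊕ (E₈)² ⊕ U². -/
def Λ0 : Matrix Λ0Ix Λ0Ix ℤ := dsum A2 (dsum (dsum E8 E8) (dsum U U))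

abbrev T0Ix : Type := (Fin 4 ⊕ (Fin 4 ⊕ Fin 4)) ⊕ (Fin 2 ⊕ Fin 2)

/-- The lattice (D₄)³ ⊕ U². -/
def T0 : Matrix T0Ix T0Ix ℤ := dsum (dsum D4 (dsum D4 D4)) (dsum U U)

/-- The odd unimodular lattice I_{21,2} = diag(1,…,1,−1,−1). -/
def I212 : Matrix (Fin 23) (Fin 23) ℤ := Matrix.diagonal fun i => if (i : ℕ) < 21 then 1 else -1

variable {ι κ : Type*} [Fintype ι] [Fintype κ]

/-- The map `v ↦ ⟨v,-⟩` from a Gram lattice to its dual `Hom(L,ℤ)`. -/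
def toDual (M : Matrix ι ι ℤ) : (ι → ℤ) →ₗ[ℤ] Module.Dual ℤ (ι → ℤ) where
  toFun v :=
    { toFun := fun w => v ⬝ᵥ M.mulVec w
      map_add' := fun a b => by simp [Matrix.mulVec_add, dotProduct_add]
      map_smul' := fun c a => by
        show v ⬝ᵥ M.mulVec (c • a) = c • (v ⬝ᵥ M.mulVec a)
        rw [Matrix.mulVec_smul, dotProduct_smul] }
  map_add' a b := by ext w; simp [add_dotProduct]
  map_smul' c a := by
    ext w
    simp only [LinearMap.coe_mk, AddHom.coe_mk, LinearMap.smul_apply, RingHom.id_apply,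
      smul_dotProduct, smul_eq_mul]

/-- The discriminant group A_L := Hom(L,ℤ)/im(L → Hom(L,ℤ)). -/
abbrev DiscGroup (M : Matrix ι ι ℤ) : Type _ :=
  Module.Dual ℤ (ι → ℤ) ⧸ LinearMap.range (toDual M)

/-- Minimal number of generators of an abelian group. -/
noncomputable def minGens (A : Type*) [AddCommGroup A] : ℕ :=
  sInf {k | ∃ S : Finset A, S.card = k ∧ AddSubgroup.closure (S : Set A) = ⊤}

/-- Orthogonal complement of a set of vectors in a Gram lattice. -/
def orthComp (M : Matrix ι ι ℤ) (s : Set (ι → ℤ)) : Submodule ℤ (ι → ℤ) where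
  carrier := {v | ∀ t ∈ s, v ⬝ᵥ M.mulVec t = 0}
  add_mem' := fun ha hb t ht => by simp [add_dotProduct, ha t ht, hb t ht]
  zero_mem' := fun t ht => by simp
  smul_mem' := fun c a ha t ht => by rw [smul_dotProduct, ha t ht, smul_zero]

/-- A submodule is primitive if the quotient by it is torsion-free. -/
def IsPrimitiveSubmodule (p : Submodule ℤ (ι → ℤ)) : Prop :=
  ∀ (v : ι → ℤ) (k : ℤ), k ≠ 0 → k • v ∈ p → v ∈ p

/-- The restriction of the form of `M` to a submodule, as a map into the dual. -/
def subToDual (M : Matrix ι ι ℤ) (p : Submodule ℤ (ι → ℤ)) : ↥p →ₗ[ℤ] Module.Dual ℤ ↥p :=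
  (p.subtype.dualMap) ∘ₗ ((toDual M) ∘ₗ p.subtype)

/-- Discriminant group of a (sub)lattice `p ⊆ L` with the restricted form. -/
abbrev DiscGroupSub (M : Matrix ι ι ℤ) (p : Submodule ℤ (ι → ℤ)) : Type _ :=
  Module.Dual ℤ ↥p ⧸ LinearMap.range (subToDual M p)

/-- A primitive isometric embedding of the lattice with Gram matrix `M` into the one
with Gram matrix `N`. -/
def IsPrimitiveEmbedding (M : Matrix ι ι ℤ) (N : Matrix κ κ ℤ)
    (f : (ι → ℤ) →ₗ[ℤ] (κ → ℤ)) : Prop :=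
  Function.Injective f ∧
  (∀ v w, f v ⬝ᵥ N.mulVec (f w) = v ⬝ᵥ M.mulVec w) ∧
  ∀ (v : κ → ℤ) (k : ℤ), k ≠ 0 → k • v ∈ LinearMap.range f → v ∈ LinearMap.range f

/-- Two Gram lattices are isometric. -/
def LatticeIsometric (M : Matrix ι ι ℤ) (N : Matrix κ κ ℤ) : Prop :=
  ∃ e : (ι → ℤ) ≃ₗ[ℤ] (κ → ℤ), ∀ v w, e v ⬝ᵥ N.mulVec (e w) = v ⬝ᵥ M.mulVec w

/-- An even lattice. -/
def IsEvenMatrix (M : Matrix ι ι ℤ) : Prop := ∀ v : ι → ℤ, 2 ∣ v ⬝ᵥ M.mulVec v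

/-- The lattice has signature (p,q): over ℝ the form is equivalent to the diagonal
form with `p` entries `+1` and `q` entries `−1`. -/
def HasSignature {n : ℕ} (M : Matrix (Fin n) (Fin n) ℤ) (p q : ℕ) : Prop :=
  p + q = n ∧ ∃ P : Matrix (Fin n) (Fin n) ℝ, IsUnit P.det ∧
    Pᵀ * (M.map (Int.cast : ℤ → ℝ)) * P =
      Matrix.diagonal (fun i : Fin n => if (i : ℕ) < p then (1 : ℝ) else -1)

end MaxAlg


namespace MaxAlg

abbrev M19Ix : Type := Fin 4 ⊕ (Fin 8 ⊕ (Fin 2 ⊕ Fin 2))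

/-- The lattice `D4 ⊕ E8 ⊕ U(2) ⊕ U`. -/
def M19 : Matrix M19Ix M19Ix ℤ := dsum D4 (dsum E8 (dsum ((2 : ℤ) • U) U))

def Amat' : Matrix (Fin 16) (Fin 16) ℤ :=
  !![1, 0, 0, 0, 0, 0, 0, 0, 0, 0, 0, 0, 0, 0, 0, 0;
    0, 1, 0, 0, 0, 0, 0, 0, 0, 0, 0, 0, 0, 0, 0, 0;
    0, 0, 1, 0, 0, 0, 0, 0, 0, 0, 0, 0, 0, 0, 0, 0;
    0, 0, 0, 1, 0, 0, 0, 0, 0, 0, 0, 0, 0, 0, 0, 0;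
    0, 0, 0, 0, 2, 0, 0, -2, 0, 2, -2, -4, -3, 2, 0, 0;
    0, 0, 0, 0, 0, 0, 0, 0, 0, 3, -2, -4, -1, 1, 0, 0;
    0, 0, 0, 0, 0, 0, 0, 0, 0, 4, -4, -4, -1, 1, 0, 0;
    0, 0, 0, 0, -1, 0, 0, 2, 0, 6, -5, -5, 0, 0, 0, 0;
    0, 0, 0, 0, 0, -1, 0, 2, 0, 5, -4, -4, 0, 0, 0, 0;
    0, 0, 0, 0, 0, 0, -1, 1, 0, 4, -3, -3, 0, 0, 0, 0;
    0, 0, 0, 0, 0, 0, 0, 0, 0, 3, -2, -2, 0, 0, 0, 0;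
    0, 0, 0, 0, 0, 0, 0, 0, -1, 2, -1, -1, 0, 0, 0, 0;
    0, 0, 0, 0, -2, 0, 0, 3, 0, 0, 0, 3, 4, -2, 0, 0;
    0, 0, 0, 0, 1, 0, 0, -1, 0, 0, 0, -1, -1, 1, 0, 0;
    0, 0, 0, 0, 0, 0, 0, 0, 0, 0, 0, 0, 0, 0, 0, 1;
    0, 0, 0, 0, 0, 0, 0, 0, 0, 0, 0, 0, 0, 0, 1, 0]

def adjA' : Matrix (Fin 16) (Fin 16) ℤ :=
  !![2, 0, 0, 0, 0, 0, 0, 0, 0, 0, 0, 0, 0, 0, 0, 0;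
    0, 2, 0, 0, 0, 0, 0, 0, 0, 0, 0, 0, 0, 0, 0, 0;
    0, 0, 2, 0, 0, 0, 0, 0, 0, 0, 0, 0, 0, 0, 0, 0;
    0, 0, 0, 2, 0, 0, 0, 0, 0, 0, 0, 0, 0, 0, 0, 0;
    0, 0, 0, 0, 4, 0, -2, 0, 0, 0, 0, 0, 2, -2, 0, 0;
    0, 0, 0, 0, 0, -2, -2, 4, -2, 0, 0, 0, 0, 4, 0, 0;
    0, 0, 0, 0, 0, -1, -1, 2, 0, -2, 1, 0, 0, 2, 0, 0;
    0, 0, 0, 0, -4, -3, -1, 4, 0, 0, -1, 0, -2, 8, 0, 0;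
    0, 0, 0, 0, -4, -2, 0, 2, 0, 0, 2, -2, -2, 6, 0, 0;
    0, 0, 0, 0, -8, -4, 0, 4, 0, 0, 2, 0, -4, 12, 0, 0;
    0, 0, 0, 0, -4, -1, -1, 2, 0, 0, 1, 0, -2, 6, 0, 0;
    0, 0, 0, 0, -8, -5, 1, 4, 0, 0, 1, 0, -4, 12, 0, 0;
    0, 0, 0, 0, 6, 4, 0, -4, 0, 0, 0, 0, 4, -8, 0, 0;
    0, 0, 0, 0, -10, -4, 2, 4, 0, 0, 0, 0, -4, 16, 0, 0;
    0, 0, 0, 0, 0, 0, 0, 0, 0, 0, 0, 0, 0, 0, 0, 2;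
    0, 0, 0, 0, 0, 0, 0, 0, 0, 0, 0, 0, 0, 0, 2, 0]

def Qmat' : Matrix (Fin 16) (Fin 16) ℤ :=
  !![1, 0, 0, 0, 0, 0, 0, 0, 0, 0, 0, 0, 0, 0, 0, 0;
    0, 1, 0, 0, 0, 0, 0, 0, 0, 0, 0, 0, 0, 0, 0, 0;
    0, 0, 1, 0, 0, 0, 0, 0, 0, 0, 0, 0, 0, 0, 0, 0;
    0, 0, 0, 1, 0, 0, 0, 0, 0, 0, 0, 0, 0, 0, 0, 0;
    0, 0, 0, 0, 2, 0, -1, 0, 0, 0, 0, 0, 1, -1, 0, 0;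
    0, 0, 0, 0, 0, -1, -1, 2, -1, 0, 0, 0, 0, 2, 0, 0;
    0, 0, 0, 0, 0, -1, -1, 1, 0, -1, 0, 0, 0, 1, 0, 0;
    0, 0, 0, 0, -2, -2, -1, 2, 0, 0, -1, 0, -1, 4, 0, 0;
    0, 0, 0, 0, -2, -1, 0, 1, 0, 0, 1, -1, -1, 3, 0, 0;
    0, 0, 0, 0, -4, -2, 0, 2, 0, 0, 1, 0, -2, 6, 0, 0;
    0, 0, 0, 0, -2, -1, -1, 1, 0, 0, 0, 0, -1, 3, 0, 0;
    0, 0, 0, 0, -4, -3, 0, 2, 0, 0, 0, 0, -2, 6, 0, 0;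
    0, 0, 0, 0, 3, 2, 0, -2, 0, 0, 0, 0, 2, -4, 0, 0;
    0, 0, 0, 0, -5, -2, 1, 2, 0, 0, 0, 0, -2, 8, 0, 0;
    0, 0, 0, 0, 0, 0, 0, 0, 0, 0, 0, 0, 0, 0, 0, 1;
    0, 0, 0, 0, 0, 0, 0, 0, 0, 0, 0, 0, 0, 0, 1, 0]

def Bmat' : Matrix (Fin 22) (Fin 16) ℤ :=
  !![0, 0, 0, 0, 0, 0, 0, 0, 0, 0, 0, 0, 0, 0, 0, 0;
    0, 0, 0, 1, 0, 0, 0, 0, 0, 0, 0, 0, 0, 0, 0, 0;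
    -1, 0, 0, 1, 0, 0, 0, 0, 0, 0, 0, 0, 0, 0, 0, 0;
    0, -1, 0, 2, 0, 0, 0, 0, 0, 0, 0, 0, 0, 0, 0, 0;
    0, 0, -1, 1, 0, 0, 0, 0, 0, 0, 0, 0, 0, 0, 0, 0;
    0, 0, 0, 0, 0, 0, 0, 0, 0, 0, 0, 0, 0, 0, 0, 0;
    0, 0, 0, 0, 0, 0, 0, 0, 0, 0, 0, 0, 0, 0, 0, 0;
    0, 0, 0, 0, 0, 0, 0, 0, 0, 0, 0, 0, 0, 0, 0, 0;
    0, 0, 0, 0, 1, 0, 0, 0, 0, 0, 0, 0, 0, 0, 0, 0;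
    0, 0, 0, 0, 0, 1, 0, 0, 0, 0, 0, 0, 0, 0, 0, 0;
    0, 0, 0, 0, 0, 0, 1, 0, 0, 0, 0, 0, 0, 0, 0, 0;
    0, 0, 0, 0, 0, 0, 0, 1, 0, 0, 0, 0, 0, 0, 0, 0;
    0, 0, 0, 0, 0, 0, 0, 0, 1, 0, 0, 0, 0, 0, 0, 0;
    0, 0, 0, 0, 0, 0, 0, 0, 0, 1, 0, 0, 0, 0, 0, 0;
    0, 0, 0, 0, 0, 0, 0, 0, 0, 0, 1, 0, 0, 0, 0, 0;
    0, 0, 0, 0, 0, 0, 0, 0, 0, 0, 0, 1, 0, 0, 0, 0;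
    0, 0, 0, 0, 0, 0, 0, 0, 0, 0, 0, 0, 0, 0, 1, 0;
    0, 0, 0, 0, 0, 0, 0, 0, 0, 0, 0, 0, 0, 0, 0, 1;
    0, 0, 0, 0, 0, 0, 0, 0, 0, 0, 0, 0, 1, 0, 0, 0;
    0, 0, 0, 0, 0, 0, 0, 0, 0, 0, 0, 0, 0, 1, 0, 0;
    0, 0, 0, 0, 0, 0, 0, 0, 0, 0, 0, 0, 1, 0, 0, 0;
    0, 0, 0, 0, 0, 0, 0, 0, 0, 0, 0, 0, 0, 1, 0, 0]

def LB' : Matrix (Fin 16) (Fin 22) ℤ :=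
  !![0, 1, -1, 0, 0, 0, 0, 0, 0, 0, 0, 0, 0, 0, 0, 0, 0, 0, 0, 0, 0, 0;
    0, 2, 0, -1, 0, 0, 0, 0, 0, 0, 0, 0, 0, 0, 0, 0, 0, 0, 0, 0, 0, 0;
    0, 1, 0, 0, -1, 0, 0, 0, 0, 0, 0, 0, 0, 0, 0, 0, 0, 0, 0, 0, 0, 0;
    0, 1, 0, 0, 0, 0, 0, 0, 0, 0, 0, 0, 0, 0, 0, 0, 0, 0, 0, 0, 0, 0;
    0, 0, 0, 0, 0, 0, 0, 0, 1, 0, 0, 0, 0, 0, 0, 0, 0, 0, 0, 0, 0, 0;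
    0, 0, 0, 0, 0, 0, 0, 0, 0, 1, 0, 0, 0, 0, 0, 0, 0, 0, 0, 0, 0, 0;
    0, 0, 0, 0, 0, 0, 0, 0, 0, 0, 1, 0, 0, 0, 0, 0, 0, 0, 0, 0, 0, 0;
    0, 0, 0, 0, 0, 0, 0, 0, 0, 0, 0, 1, 0, 0, 0, 0, 0, 0, 0, 0, 0, 0;
    0, 0, 0, 0, 0, 0, 0, 0, 0, 0, 0, 0, 1, 0, 0, 0, 0, 0, 0, 0, 0, 0;
    0, 0, 0, 0, 0, 0, 0, 0, 0, 0, 0, 0, 0, 1, 0, 0, 0, 0, 0, 0, 0, 0;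
    0, 0, 0, 0, 0, 0, 0, 0, 0, 0, 0, 0, 0, 0, 1, 0, 0, 0, 0, 0, 0, 0;
    0, 0, 0, 0, 0, 0, 0, 0, 0, 0, 0, 0, 0, 0, 0, 1, 0, 0, 0, 0, 0, 0;
    0, 0, 0, 0, 0, 0, 0, 0, 0, 0, 0, 0, 0, 0, 0, 0, 0, 0, 1, 0, 0, 0;
    0, 0, 0, 0, 0, 0, 0, 0, 0, 0, 0, 0, 0, 0, 0, 0, 0, 0, 0, 1, 0, 0;
    0, 0, 0, 0, 0, 0, 0, 0, 0, 0, 0, 0, 0, 0, 0, 0, 1, 0, 0, 0, 0, 0;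
    0, 0, 0, 0, 0, 0, 0, 0, 0, 0, 0, 0, 0, 0, 0, 0, 0, 1, 0, 0, 0, 0]

def Cmat' : Matrix (Fin 22) (Fin 6) ℤ :=
  !![0, 0, -2, 2, 0, 0;
    0, 0, -2, 3, 0, 0;
    0, 0, -3, 4, 0, 0;
    0, 0, -4, 6, 0, 0;
    0, 0, -3, 5, 0, 0;
    0, 0, -2, 4, 0, 0;
    -1, 0, -1, 3, 0, 0;
    0, -1, 0, 2, 0, 0;
    0, 0, 0, 0, 0, 0;
    0, 0, 0, 0, 0, 0;
    0, 0, 0, 0, 0, 0;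
    0, 0, 0, 0, 0, 0;
    0, 0, 0, 0, 0, 0;
    0, 0, 0, 0, 0, 0;
    0, 0, 0, 0, 0, 0;
    0, 0, 0, 0, 0, 0;
    0, 0, 0, 0, 0, 0;
    0, 0, 0, 0, 0, 0;
    0, 0, 0, 0, 1, 0;
    0, 0, 0, 0, 0, 1;
    0, 0, 0, 0, -1, 0;
    0, 0, 0, 0, 0, -1]

def LC' : Matrix (Fin 6) (Fin 22) ℤ :=
  !![0, 2, 0, 0, -3, 3, -1, 0, 0, 0, 0, 0, 0, 0, 0, 0, 0, 0, 0, 0, 0, 0;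
    0, 2, 0, 0, -4, 4, 0, -1, 0, 0, 0, 0, 0, 0, 0, 0, 0, 0, 0, 0, 0, 0;
    0, 1, 0, 0, -3, 3, 0, 0, 0, 0, 0, 0, 0, 0, 0, 0, 0, 0, 0, 0, 0, 0;
    0, 1, 0, 0, -2, 2, 0, 0, 0, 0, 0, 0, 0, 0, 0, 0, 0, 0, 0, 0, 0, 0;
    0, 0, 0, 0, 0, 0, 0, 0, 0, 0, 0, 0, 0, 0, 0, 0, 0, 0, 1, 0, 0, 0;
    0, 0, 0, 0, 0, 0, 0, 0, 0, 0, 0, 0, 0, 0, 0, 0, 0, 0, 0, 1, 0, 0]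

def Lc' : Matrix (Fin 6) (Fin 22) ℤ :=
  !![-128, 10, -54, 20, 84, 148, -230, 0, 0, 0, 0, 0, 0, 0, 0, 0, 0, 0, 0, 0, 0, 0;
    -184, 0, -92, 0, 92, 184, 0, -230, 0, 0, 0, 0, 0, 0, 0, 0, 0, 0, 0, 0, 0, 0;
    -148, -10, -84, -20, 54, 128, 0, 0, 0, 0, 0, 0, 0, 0, 0, 0, 0, 0, 0, 0, 0, 0;
    -92, 0, -46, 0, 46, 92, 0, 0, 0, 0, 0, 0, 0, 0, 0, 0, 0, 0, 0, 0, 0, 0;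
    0, 0, 0, 0, 0, 0, 0, 0, 0, 0, 0, 0, 0, 0, 0, 0, 0, 0, 115, 0, -115, 0;
    0, 0, 0, 0, 0, 0, 0, 0, 0, 0, 0, 0, 0, 0, 0, 0, 0, 0, 0, 115, 0, -115]

def Gp' : Matrix (Fin 22) (Fin 16) ℤ :=
  !![28, -20, -18, -90, 0, 0, 0, 0, 0, 0, 0, 0, 0, 0, 0, 0;
    120, 210, 120, 140, 0, 0, 0, 0, 0, 0, 0, 0, 0, 0, 0, 0;
    -96, -30, -4, -20, 0, 0, 0, 0, 0, 0, 0, 0, 0, 0, 0, 0;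
    10, -40, 10, 50, 0, 0, 0, 0, 0, 0, 0, 0, 0, 0, 0, 0;
    -4, -30, -96, -20, 0, 0, 0, 0, 0, 0, 0, 0, 0, 0, 0, 0;
    -18, -20, 28, -90, 0, 0, 0, 0, 0, 0, 0, 0, 0, 0, 0, 0;
    0, 0, 0, 0, 0, 0, 0, 0, 0, 0, 0, 0, 0, 0, 0, 0;
    0, 0, 0, 0, 0, 0, 0, 0, 0, 0, 0, 0, 0, 0, 0, 0;
    0, 0, 0, 0, 920, 1150, 1610, 2300, 1840, 1380, 920, 460, 0, 0, 0, 0;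
    0, 0, 0, 0, 1150, 1840, 2300, 3450, 2760, 2070, 1380, 690, 0, 0, 0, 0;
    0, 0, 0, 0, 1610, 2300, 3220, 4600, 3680, 2760, 1840, 920, 0, 0, 0, 0;
    0, 0, 0, 0, 2300, 3450, 4600, 6900, 5520, 4140, 2760, 1380, 0, 0, 0, 0;
    0, 0, 0, 0, 1840, 2760, 3680, 5520, 4600, 3450, 2300, 1150, 0, 0, 0, 0;
    0, 0, 0, 0, 1380, 2070, 2760, 4140, 3450, 2760, 1840, 920, 0, 0, 0, 0;
    0, 0, 0, 0, 920, 1380, 1840, 2760, 2300, 1840, 1380, 690, 0, 0, 0, 0;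
    0, 0, 0, 0, 460, 690, 920, 1380, 1150, 920, 690, 460, 0, 0, 0, 0;
    0, 0, 0, 0, 0, 0, 0, 0, 0, 0, 0, 0, 0, 0, 0, 230;
    0, 0, 0, 0, 0, 0, 0, 0, 0, 0, 0, 0, 0, 0, 230, 0;
    0, 0, 0, 0, 0, 0, 0, 0, 0, 0, 0, 0, 0, 115, 0, 0;
    0, 0, 0, 0, 0, 0, 0, 0, 0, 0, 0, 0, 115, 0, 0, 0;
    0, 0, 0, 0, 0, 0, 0, 0, 0, 0, 0, 0, 0, 115, 0, 0;
    0, 0, 0, 0, 0, 0, 0, 0, 0, 0, 0, 0, 115, 0, 0, 0]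

def cvec' : Fin 16 → ℤ := ![0, 0, 0, 0, 0, 1, 1, 0, 0, 0, 1, 0, 0, 0, 0, 0]

def rvec' : Fin 16 → ℤ := ![0, 0, 0, 0, 0, 0, 1, 1, 0, 0, 1, 1, 0, 0, 0, 0]

def cpvec' : Fin 16 → ℤ := ![0, 0, 0, 0, 0, 0, 0, 0, 0, 5, -4, -5, -1, 1, 0, 0]

section Aux

def enc22 : K3Ix → Fin 22
  | .inl (.inl a) => ⟨a.1, by have := a.2; omega⟩
  | .inl (.inr a) => ⟨8 + a.1, by have := a.2; omega⟩
  | .inr (.inl a) => ⟨16 + a.1, by have := a.2; omega⟩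
  | .inr (.inr (.inl a)) => ⟨18 + a.1, by have := a.2; omega⟩
  | .inr (.inr (.inr a)) => ⟨20 + a.1, by have := a.2; omega⟩

def enc16 : M19Ix → Fin 16
  | .inl a => ⟨a.1, by have := a.2; omega⟩
  | .inr (.inl a) => ⟨4 + a.1, by have := a.2; omega⟩
  | .inr (.inr (.inl a)) => ⟨12 + a.1, by have := a.2; omega⟩
  | .inr (.inr (.inr a)) => ⟨14 + a.1, by have := a.2; omega⟩

def encT : T0Ix → Fin 16
  | .inl (.inl a) => ⟨a.1, by have := a.2; omega⟩
  | .inl (.inr (.inl a)) => ⟨4 + a.1, by have := a.2; omega⟩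
  | .inl (.inr (.inr a)) => ⟨8 + a.1, by have := a.2; omega⟩
  | .inr (.inl a) => ⟨12 + a.1, by have := a.2; omega⟩
  | .inr (.inr a) => ⟨14 + a.1, by have := a.2; omega⟩

def enc6 : (Fin 4 ⊕ Fin 2) → Fin 6
  | .inl a => ⟨a.1, by have := a.2; omega⟩
  | .inr a => ⟨4 + a.1, by have := a.2; omega⟩

def Amat : Matrix M19Ix T0Ix ℤ := fun i j => Amat' (enc16 i) (encT j)
def adjA : Matrix T0Ix M19Ix ℤ := fun i j => adjA' (encT i) (enc16 j)
def Qmat : Matrix T0Ix M19Ix ℤ := fun i j => Qmat' (encT i) (enc16 j)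
def Bmat : Matrix K3Ix M19Ix ℤ := fun i j => Bmat' (enc22 i) (enc16 j)
def LBmat : Matrix M19Ix K3Ix ℤ := fun i j => LB' (enc16 i) (enc22 j)
def Cmat : Matrix K3Ix (Fin 4 ⊕ Fin 2) ℤ := fun i j => Cmat' (enc22 i) (enc6 j)
def LCmat : Matrix (Fin 4 ⊕ Fin 2) K3Ix ℤ := fun i j => LC' (enc6 i) (enc22 j)
def Lcmat : Matrix (Fin 4 ⊕ Fin 2) K3Ix ℤ := fun i j => Lc' (enc6 i) (enc22 j)
def Gpmat : Matrix K3Ix M19Ix ℤ := fun i j => Gp' (enc22 i) (enc16 j)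
def cvec : M19Ix → ℤ := fun i => cvec' (enc16 i)
def rvec : T0Ix → ℤ := fun i => rvec' (encT i)
def cpvec : T0Ix → ℤ := fun i => cpvec' (encT i)

variable {ι₁ ι₂ κ : Type*} [Fintype ι₁] [Fintype ι₂] [Fintype κ]
variable [DecidableEq ι₁] [DecidableEq ι₂] [DecidableEq κ]

lemma dot_aux (X : Matrix κ ι₁ ℤ) (N : Matrix κ κ ℤ) (Y : Matrix κ ι₂ ℤ)
    (v : ι₁ → ℤ) (w : ι₂ → ℤ) :
    (X *ᵥ v) ⬝ᵥ N *ᵥ (Y *ᵥ w) = v ⬝ᵥ (Xᵀ * N * Y) *ᵥ w := by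
  rw [← Matrix.mulVec_mulVec, ← Matrix.mulVec_mulVec, Matrix.dotProduct_mulVec (A := Xᵀ),
    Matrix.vecMul_transpose]

lemma vecMulVec_mulVec (r : ι₁ → ℤ) (c : ι₂ → ℤ) (x : ι₂ → ℤ) :
    Matrix.vecMulVec r c *ᵥ x = (c ⬝ᵥ x) • r := by
  ext i
  simp only [Matrix.mulVec, Matrix.vecMulVec_apply, dotProduct, Pi.smul_apply,
    smul_eq_mul]
  rw [Finset.sum_mul]
  exact Finset.sum_congr rfl fun j _ => by ring

lemma range_helper {k : ℤ} (hk : k ≠ 0) (C : Matrix κ ι₁ ℤ) (L : Matrix ι₁ κ ℤ)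
    (hLC : L * C = 1) {v : κ → ℤ} {z : ι₁ → ℤ} (h : k • v = C *ᵥ z) :
    C *ᵥ (L *ᵥ v) = v := by
  have hz : z = k • (L *ᵥ v) := by
    have h2 : L *ᵥ (k • v) = L *ᵥ (C *ᵥ z) := congrArg _ h
    rw [Matrix.mulVec_smul, Matrix.mulVec_mulVec, hLC, Matrix.one_mulVec] at h2
    exact h2.symm
  rw [hz, Matrix.mulVec_smul] at h
  exact (smul_right_injective _ hk h).symm

lemma inj_helper {d : ℤ} (hd : d ≠ 0) (C : Matrix κ ι₁ ℤ) (L : Matrix ι₁ κ ℤ)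
    (hLC : L * C = d • 1) : Function.Injective C.mulVecLin := by
  intro v w h
  have h2 : L *ᵥ (C *ᵥ v) = L *ᵥ (C *ᵥ w) := by
    simpa only [Matrix.mulVecLin_apply] using congrArg _ h
  rw [Matrix.mulVec_mulVec, Matrix.mulVec_mulVec, hLC, Matrix.smul_mulVec,
    Matrix.smul_mulVec, Matrix.one_mulVec, Matrix.one_mulVec] at h2
  exact smul_right_injective _ hd h2

lemma mem_orthComp {ι : Type*} [Fintype ι] {M : Matrix ι ι ℤ} {s : Set (ι → ℤ)} {x : ι → ℤ} :
    x ∈ orthComp M s ↔ ∀ t ∈ s, x ⬝ᵥ M.mulVec t = 0 := Iff.rfl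

-- decidable matrix identities
lemma hA : Amatᵀ * M19 * Amat = T0 := by decide
lemma hadj1 : adjA * Amat = (2 : ℤ) • 1 := by decide
lemma hadj2 : Amat * adjA = (2 : ℤ) • 1 := by decide
lemma hdecomp : adjA = (2 : ℤ) • Qmat + Matrix.vecMulVec rvec cvec := by decide
lemma hcA : Amat.vecMul cvec = (2 : ℤ) • cpvec := by decide
lemma hB : Bmatᵀ * K3 * Bmat = M19 := by decide
lemma hLB : LBmat * Bmat = 1 := by decide
lemma hC : Cmatᵀ * K3 * Cmat = dsum D4 ((2 : ℤ) • U) := by decide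
lemma hLC : LCmat * Cmat = 1 := by decide
lemma hCB : Cmatᵀ * K3 * Bmat = 0 := by decide
lemma hK3symm : K3ᵀ = K3 := by decide
lemma hD : (230 : ℤ) • (1 : Matrix K3Ix K3Ix ℤ) = Cmat * Lcmat + Gpmat * (Bmatᵀ * K3) := by
  decide

end Aux

/-- `(D4)³ ⊕ U²` is isometric to an index-2 sublattice of
`D4 ⊕ E8 ⊕ U(2) ⊕ U`, and `D4 ⊕ E8 ⊕ U(2) ⊕ U` admits a primitive isometric embedding into
the K3 lattice whose orthogonal complement is isometric to `D4 ⊕ U(2)`. -/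
theorem T0_index_two_in_M19_and_M19_embeds_in_K3 :
    (∃ f : (T0Ix → ℤ) →ₗ[ℤ] (M19Ix → ℤ), Function.Injective f ∧
      (∀ v w, f v ⬝ᵥ M19.mulVec (f w) = v ⬝ᵥ T0.mulVec w) ∧
      Nat.card ((M19Ix → ℤ) ⧸ LinearMap.range f) = 2) ∧
    (∃ g : (M19Ix → ℤ) →ₗ[ℤ] (K3Ix → ℤ), IsPrimitiveEmbedding M19 K3 g ∧
      ∃ e : ((Fin 4 ⊕ Fin 2) → ℤ) →ₗ[ℤ] (K3Ix → ℤ), Function.Injective e ∧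
        LinearMap.range e = orthComp K3 (LinearMap.range g : Set (K3Ix → ℤ)) ∧
        ∀ v w, e v ⬝ᵥ K3.mulVec (e w) = v ⬝ᵥ (dsum D4 ((2 : ℤ) • U)).mulVec w) := by
  constructor
  · -- Part 1
    refine ⟨Matrix.mulVecLin Amat, inj_helper two_ne_zero Amat adjA hadj1, ?_, ?_⟩
    · intro v w
      simpa only [Matrix.mulVecLin_apply, hA] using dot_aux Amat M19 Amat v w
    · -- index 2
      set φ : (M19Ix → ℤ) →ₗ[ℤ] ZMod 2 :=
        { toFun := fun x => ((cvec ⬝ᵥ x : ℤ) : ZMod 2)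
          map_add' := fun x y => by rw [dotProduct_add, Int.cast_add]
          map_smul' := fun k x => by
            rw [dotProduct_smul, smul_eq_mul, Int.cast_mul, RingHom.id_apply, zsmul_eq_mul] } with hφ
      have hφ_apply : ∀ x, φ x = ((cvec ⬝ᵥ x : ℤ) : ZMod 2) := fun x => rfl
      have hrange : LinearMap.range (Matrix.mulVecLin Amat) = LinearMap.ker φ := by
        ext x
        constructor
        · rintro ⟨v, rfl⟩
          rw [LinearMap.mem_ker, hφ_apply, Matrix.mulVecLin_apply,
            Matrix.dotProduct_mulVec, hcA, smul_dotProduct, smul_eq_mul, Int.cast_mul]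
          exact mul_eq_zero_of_left (by decide) _
        · intro hx
          rw [LinearMap.mem_ker, hφ_apply] at hx
          obtain ⟨m, hm⟩ := (ZMod.intCast_zmod_eq_zero_iff_dvd _ 2).mp hx
          push_cast at hm
          refine ⟨Qmat *ᵥ x + m • rvec, ?_⟩
          rw [Matrix.mulVecLin_apply]
          have key : (2 : ℤ) • (Amat *ᵥ (Qmat *ᵥ x + m • rvec)) = (2 : ℤ) • x := by
            rw [← Matrix.mulVec_smul]
            have h1 : (2 : ℤ) • (Qmat *ᵥ x + m • rvec) = adjA *ᵥ x := by
              rw [hdecomp, Matrix.add_mulVec, Matrix.smul_mulVec,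
                vecMulVec_mulVec, hm, smul_add, smul_smul]
            rw [h1, Matrix.mulVec_mulVec, hadj2, Matrix.smul_mulVec,
              Matrix.one_mulVec]
          exact smul_right_injective _ two_ne_zero key
      have htop : LinearMap.range φ = ⊤ := by
        rw [Submodule.eq_top_iff']
        intro y
        have hy : ∀ z : ZMod 2, z = 0 ∨ z = 1 := by decide
        rcases hy y with hy | hy
        · exact hy ▸ Submodule.zero_mem _
        · refine ⟨Pi.single (Sum.inr (Sum.inl 1) : M19Ix) 1, ?_⟩
          rw [hφ_apply, dotProduct_single, hy]
          norm_num
          rfl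
      have equiv : ((M19Ix → ℤ) ⧸ LinearMap.range (Matrix.mulVecLin Amat)) ≃ₗ[ℤ] ZMod 2 :=
        (Submodule.quotEquivOfEq _ _ hrange).trans
          (φ.quotKerEquivRange.trans ((LinearEquiv.ofEq _ _ htop).trans (Submodule.topEquiv)))
      rw [Nat.card_congr equiv.toEquiv, Nat.card_zmod]
  · -- Part 2
    refine ⟨Matrix.mulVecLin Bmat, ⟨inj_helper one_ne_zero Bmat LBmat (by rw [hLB, one_smul]),
      ?_, ?_⟩, Matrix.mulVecLin Cmat, inj_helper one_ne_zero Cmat LCmat (by rw [hLC, one_smul]),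
      ?_, ?_⟩
    · intro v w
      simpa only [Matrix.mulVecLin_apply, hB] using dot_aux Bmat K3 Bmat v w
    · -- primitivity of g
      rintro v k hk ⟨u, hu⟩
      rw [Matrix.mulVecLin_apply] at hu
      exact ⟨LBmat *ᵥ v, by
        rw [Matrix.mulVecLin_apply]
        exact range_helper hk Bmat LBmat hLB hu.symm⟩
    · -- range e = orthComp
      apply le_antisymm
      · rintro x ⟨y, rfl⟩
        rw [mem_orthComp]
        rintro t ⟨u, rfl⟩
        rw [Matrix.mulVecLin_apply, Matrix.mulVecLin_apply, dot_aux, hCB,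
          Matrix.zero_mulVec, dotProduct_zero]
      · intro v hv
        rw [mem_orthComp] at hv
        have hF : (Bmatᵀ * K3) *ᵥ v = 0 := by
          ext j
          have ht : (Bmat *ᵥ Pi.single j 1) ∈ (LinearMap.range (Matrix.mulVecLin Bmat) : Set (K3Ix → ℤ)) :=
            ⟨Pi.single j 1, by rw [Matrix.mulVecLin_apply]⟩
          have h0 := hv _ ht
          have htr : K3 * Bmat = (Bmatᵀ * K3)ᵀ := by
            rw [Matrix.transpose_mul, Matrix.transpose_transpose, hK3symm]
          have hsw : v ⬝ᵥ K3 *ᵥ (Bmat *ᵥ Pi.single j 1) =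
              ((Bmatᵀ * K3) *ᵥ v) ⬝ᵥ Pi.single j 1 := by
            rw [Matrix.dotProduct_mulVec, Matrix.dotProduct_mulVec, Matrix.vecMul_vecMul,
              htr, Matrix.vecMul_transpose]
          rw [hsw, dotProduct_single, mul_one] at h0
          simpa using h0
        have h230 : (230 : ℤ) • v = Cmat *ᵥ (Lcmat *ᵥ v) := by
          have := congrArg (fun M => M *ᵥ v) hD
          simpa only [Matrix.smul_mulVec, Matrix.one_mulVec, Matrix.add_mulVec,
            ← Matrix.mulVec_mulVec, hF, Matrix.mulVec_zero, add_zero] using this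
        exact ⟨LCmat *ᵥ v, by
          rw [Matrix.mulVecLin_apply]
          exact range_helper (by norm_num : (230:ℤ) ≠ 0) Cmat LCmat hLC h230⟩
    · intro v w
      simpa only [Matrix.mulVecLin_apply, hC] using dot_aux Cmat K3 Cmat v w

end MaxAlg
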